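/- There exists a universal constant C > 0 such that for every p ∈ [1,∞), all integers n, W ≥ 1, and every integer λ ≥ 1, P_{p,W,n}(max C_π(0) > λ) ≤ C·W²·Σ_{j=0}^{λ} exp(−(λ − j)^p / W^p)·P_{p,W,n}(max C_π(0) = j). -/

import Mathlib

open Finset

/-- The integer interval `[-n, n]`, as a type. -/
abbrev Box (n : ℕ) : Type := {x : ℤ // x ∈ Finset.Icc (-(n : ℤ)) (n : ℤ)}

/-- The point `0 ∈ [-n, n]`. -/
def boxZero (n : ℕ) : Box n :=
  ⟨0, by simp⟩

/-- The maximum of the cycle of `j` under `π`, i.e. `max C_π(j)` where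
`C_π(j) = {π^k(j) : k ∈ ℤ}`. -/
noncomputable def maxCycle {n : ℕ} (π : Equiv.Perm (Box n)) (j : Box n) : ℤ :=
  sSup {x : ℤ | ∃ k : ℤ, (((π ^ k) j : Box n) : ℤ) = x}

/-- The minimum of the cycle of `j` under `π`. -/
noncomputable def minCycle {n : ℕ} (π : Equiv.Perm (Box n)) (j : Box n) : ℤ :=
  sInf {x : ℤ | ∃ k : ℤ, (((π ^ k) j : Box n) : ℤ) = x}

/-- The diameter of the cycle of `j` under `π`. -/
noncomputable def diamCycle {n : ℕ} (π : Equiv.Perm (Box n)) (j : Box n) : ℤ :=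
  maxCycle π j - minCycle π j

/-- The Boltzmann–Gibbs weight `exp(-W^{-p} Σ_i |π(i) - i|^p)`. -/
noncomputable def gibbsWeight (p : ℝ) (W n : ℕ) (π : Equiv.Perm (Box n)) : ℝ :=
  Real.exp (-(W : ℝ) ^ (-p) * ∑ i : Box n, |((π i : ℤ) : ℝ) - ((i : ℤ) : ℝ)| ^ p)

open scoped Classical in
/-- The probability of the event `E` under the Gibbs measure `P_{p,W,n}`. -/
noncomputable def gibbsProb (p : ℝ) (W n : ℕ) (E : Set (Equiv.Perm (Box n))) : ℝ :=
  (∑ π : Equiv.Perm (Box n), if π ∈ E then gibbsWeight p W n π else 0) /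
    ∑ π : Equiv.Perm (Box n), gibbsWeight p W n π

/-- The probability of a single permutation under the Gibbs measure `P_{p,W,n}`. -/
noncomputable def gibbsP (p : ℝ) (W n : ℕ) (π : Equiv.Perm (Box n)) : ℝ :=
  gibbsWeight p W n π / ∑ σ : Equiv.Perm (Box n), gibbsWeight p W n σ

/-- The set `S_W` of permutations displacing each point by at most `W`. -/
def SW (n W : ℕ) : Set (Equiv.Perm (Box n)) :=
  {π | ∀ i : Box n, |(π i : ℤ) - (i : ℤ)| ≤ (W : ℤ)}

open scoped Classical in
/-- The probability of the event `E` under the uniform measure `P_{∞,W,n}` on `S_W`. -/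
noncomputable def unifProb (W n : ℕ) (E : Set (Equiv.Perm (Box n))) : ℝ :=
  ((Finset.univ.filter fun π : Equiv.Perm (Box n) => π ∈ SW n W ∧ π ∈ E).card : ℝ) /
    ((Finset.univ.filter fun π : Equiv.Perm (Box n) => π ∈ SW n W).card : ℝ)

/-- `Period(π, j)`: the least positive `m` with `π^m(j) = j`. -/
noncomputable def permPeriod {n : ℕ} (π : Equiv.Perm (Box n)) (j : Box n) : ℕ :=
  sInf {m : ℕ | 0 < m ∧ (π ^ m) j = j}

/-- `i_first(π)` for the threshold `t`. -/
noncomputable def iFirst {n : ℕ} (t : ℝ) (π : Equiv.Perm (Box n)) : ℕ :=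
  sInf {j : ℕ | ((((π ^ j) (boxZero n) : Box n) : ℤ) : ℝ) ≤ t ∧
    t < ((((π ^ (j + 1)) (boxZero n) : Box n) : ℤ) : ℝ)}

/-- `i_last(π)` for the threshold `t`. -/
noncomputable def iLast {n : ℕ} (t : ℝ) (π : Equiv.Perm (Box n)) : ℕ :=
  sSup {j : ℕ | j < permPeriod π (boxZero n) ∧
    ((((π ^ (j + 1)) (boxZero n) : Box n) : ℤ) : ℝ) ≤ t ∧
    t < ((((π ^ j) (boxZero n) : Box n) : ℤ) : ℝ)}

/-- The uncrossing map `Φ_t(π) = π ∘ (π^{i_first+1}(0)  π^{i_last+1}(0))`. -/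
noncomputable def Phi {n : ℕ} (t : ℝ) (π : Equiv.Perm (Box n)) : Equiv.Perm (Box n) :=
  π * Equiv.swap ((π ^ (iFirst t π + 1)) (boxZero n)) ((π ^ (iLast t π + 1)) (boxZero n))



open scoped NNReal

namespace OneStep
variable {n : ℕ} (π : Equiv.Perm (Box n))


lemma rpow_superadd {p : ℝ} (hp : 1 ≤ p) {a b : ℝ} (ha : 0 ≤ a) (hb : 0 ≤ b) :
    a ^ p + b ^ p ≤ (a + b) ^ p := by
  have h1 := NNReal.add_rpow_le_rpow_add (a.toNNReal) (b.toNNReal) hp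
  have h2 := (NNReal.coe_le_coe).2 h1
  rw [NNReal.coe_add, NNReal.coe_rpow, NNReal.coe_rpow, NNReal.coe_rpow, NNReal.coe_add,
    Real.coe_toNNReal a ha, Real.coe_toNNReal b hb] at h2
  exact h2

lemma rpow_superadd' {p : ℝ} (hp : 1 ≤ p) {a b c : ℝ} (ha : 0 ≤ a) (hb : 0 ≤ b)
    (h : a + b = c) : a ^ p + b ^ p ≤ c ^ p := h ▸ rpow_superadd hp ha hb

lemma cost_main {p lam j a c' a' c : ℝ} (hp : 1 ≤ p) (hj : j ≤ lam)
    (ha : a ≤ j) (hc' : c' ≤ j) (ha' : lam + 1 ≤ a') (hc : lam + 1 ≤ c) :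
    (lam - j) ^ p + (j - (if c' ≤ a then a else c')) ^ p
      + ((if c ≤ a' then c else a') - (lam + 1)) ^ p + |a - c'| ^ p + |a' - c| ^ p
      ≤ (a' - a) ^ p + (c - c') ^ p := by
  have hp0 : 0 ≤ p := le_trans zero_le_one hp
  set lo := if c' ≤ a then a else c' with hlo
  set hi := if c ≤ a' then c else a' with hhi
  have hloj : lo ≤ j := by rw [hlo]; split <;> assumption
  have hhil : lam + 1 ≤ hi := by rw [hhi]; split <;> assumption
  have hlohi : lo + 1 ≤ hi := by linarith
  -- Step 2 : (lam-j)^p + (j-lo)^p + (hi-(lam+1))^p ≤ 2 (hi-lo)^p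
  have step2 : (lam - j) ^ p + (j - lo) ^ p + (hi - (lam + 1)) ^ p ≤ 2 * (hi - lo) ^ p := by
    have h1 : (lam - j) ^ p + (j - lo) ^ p ≤ (lam - lo) ^ p :=
      rpow_superadd' hp (by linarith) (by linarith) (by ring)
    have h2 : (lam - lo) ^ p ≤ (hi - lo) ^ p :=
      Real.rpow_le_rpow (by linarith) (by linarith) hp0
    have h3 : (hi - (lam + 1)) ^ p ≤ (hi - lo) ^ p :=
      Real.rpow_le_rpow (by linarith) (by linarith) hp0
    linarith
  -- Step 1 : |a-c'|^p + |a'-c|^p + 2 (hi-lo)^p ≤ (a'-a)^p + (c-c')^p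
  have step1 : |a - c'| ^ p + |a' - c| ^ p + 2 * (hi - lo) ^ p ≤ (a' - a) ^ p + (c - c') ^ p := by
    rcases le_or_gt c' a with h1 | h1 <;> rcases le_or_gt c a' with h2 | h2
    · -- case I : lo = a, hi = c
      rw [hlo, hhi, if_pos h1, if_pos h2, abs_of_nonneg (by linarith), abs_of_nonneg (by linarith)]
      have e1 : (a' - c) ^ p + (c - a) ^ p ≤ (a' - a) ^ p :=
        rpow_superadd' hp (by linarith) (by linarith) (by ring)
      have e2 : (a - c') ^ p + (c - a) ^ p ≤ (c - c') ^ p :=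
        rpow_superadd' hp (by linarith) (by linarith) (by ring)
      linarith
    · -- case II : lo = a, hi = a'
      rw [hlo, hhi, if_pos h1, if_neg (not_le.mpr h2), abs_of_nonneg (by linarith),
        abs_sub_comm a' c, abs_of_nonneg (by linarith)]
      have e1 : (c - a') ^ p + (a' - c') ^ p ≤ (c - c') ^ p :=
        rpow_superadd' hp (by linarith) (by linarith) (by ring)
      have e2 : (a - c') ^ p + (a' - a) ^ p ≤ (a' - c') ^ p :=
        rpow_superadd' hp (by linarith) (by linarith) (by ring)
      linarith
    · -- case III : lo = c', hi = c
      rw [hlo, hhi, if_neg (not_le.mpr h1), if_pos h2, abs_sub_comm a c',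
        abs_of_nonneg (by linarith), abs_of_nonneg (by linarith)]
      have e1 : (a' - c) ^ p + (c - a) ^ p ≤ (a' - a) ^ p :=
        rpow_superadd' hp (by linarith) (by linarith) (by ring)
      have e2 : (c' - a) ^ p + (c - c') ^ p ≤ (c - a) ^ p :=
        rpow_superadd' hp (by linarith) (by linarith) (by ring)
      linarith
    · -- case IV : lo = c', hi = a'
      rw [hlo, hhi, if_neg (not_le.mpr h1), if_neg (not_le.mpr h2), abs_sub_comm a c',
        abs_sub_comm a' c, abs_of_nonneg (by linarith), abs_of_nonneg (by linarith)]
      have e1 : (c' - a) ^ p + (a' - c') ^ p ≤ (a' - a) ^ p :=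
        rpow_superadd' hp (by linarith) (by linarith) (by ring)
      have e2 : (c - a') ^ p + (a' - c') ^ p ≤ (c - c') ^ p :=
        rpow_superadd' hp (by linarith) (by linarith) (by ring)
      linarith
  linarith

variable {n : ℕ} (π : Equiv.Perm (Box n))

lemma box_le (x : Box n) : (x : ℤ) ≤ n := (Finset.mem_Icc.mp x.2).2
lemma box_ge (x : Box n) : -(n : ℤ) ≤ x := (Finset.mem_Icc.mp x.2).1

lemma zpow_reduce (k : ℤ) : ∃ m : ℕ, (π ^ (m : ℤ)) = π ^ k := by
  have hN : (0 : ℤ) < (orderOf π : ℤ) := by exact_mod_cast orderOf_pos π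
  refine ⟨(k % (orderOf π : ℤ)).toNat, ?_⟩
  rw [Int.toNat_of_nonneg (Int.emod_nonneg k (by positivity))]
  exact zpow_mod_orderOf π k

lemma le_maxCycle (m : ℕ) : (((π ^ m) (boxZero n) : Box n) : ℤ) ≤ maxCycle π (boxZero n) := by
  apply le_csSup
  · exact ⟨(n : ℤ), by rintro x ⟨k, rfl⟩; exact box_le _⟩
  · exact ⟨(m : ℤ), by rw [zpow_natCast]⟩

lemma maxCycle_nonneg : 0 ≤ maxCycle π (boxZero n) := by
  have := le_maxCycle π 0
  simpa [boxZero] using this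

lemma maxCycle_exists : ∃ m : ℕ, (((π ^ m) (boxZero n) : Box n) : ℤ) = maxCycle π (boxZero n) := by
  have hmem : maxCycle π (boxZero n) ∈
      {x : ℤ | ∃ k : ℤ, (((π ^ k) (boxZero n) : Box n) : ℤ) = x} := by
    apply Int.csSup_mem
    · exact ⟨0, 0, by simp [boxZero]⟩
    · exact ⟨(n : ℤ), by rintro x ⟨k, rfl⟩; exact box_le _⟩
  obtain ⟨k, hk⟩ := hmem
  obtain ⟨m, hm⟩ := zpow_reduce π k
  exact ⟨m, by rw [← hk, ← hm, zpow_natCast]⟩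

lemma maxCycle_le {b : ℤ} (h : ∀ m : ℕ, (((π ^ m) (boxZero n) : Box n) : ℤ) ≤ b) :
    maxCycle π (boxZero n) ≤ b := by
  have hne : {x : ℤ | ∃ k : ℤ, (((π ^ k) (boxZero n) : Box n) : ℤ) = x}.Nonempty :=
    ⟨(((π ^ (0:ℤ)) (boxZero n) : Box n) : ℤ), 0, rfl⟩
  apply csSup_le hne
  rintro x ⟨k, rfl⟩
  obtain ⟨m, hm⟩ := zpow_reduce π k
  rw [← hm, zpow_natCast]; exact h m

lemma construction {lam : ℕ} (h : (lam : ℤ) < maxCycle π (boxZero n)) :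
    ∃ A C : Box n, A ≠ C ∧
      maxCycle (π * Equiv.swap A C) (boxZero n) ≤ lam ∧
      (A : ℤ) ≤ maxCycle (π * Equiv.swap A C) (boxZero n) ∧
      ((π C : Box n) : ℤ) ≤ maxCycle (π * Equiv.swap A C) (boxZero n) ∧
      (lam : ℤ) + 1 ≤ ((π A : Box n) : ℤ) ∧ (lam : ℤ) + 1 ≤ (C : ℤ) := by
  classical
  set z0 := boxZero n with hz0
  have hz0v : ((z0 : Box n) : ℤ) = 0 := rfl
  set x : ℕ → Box n := fun k => (π ^ k) z0 with hx
  have hstep : ∀ k, x (k + 1) = π (x k) := by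
    intro k
    show (π ^ (k + 1)) z0 = π ((π ^ k) z0)
    rw [pow_succ']; rfl
  set per := Function.minimalPeriod (⇑π) z0 with hperdef
  have hperpos : 0 < per := by
    apply Function.IsPeriodicPt.minimalPeriod_pos (orderOf_pos π)
    show (⇑π)^[orderOf π] z0 = z0
    rw [← Equiv.Perm.coe_pow, pow_orderOf_eq_one]; rfl
  have hxiter : ∀ k, x k = (⇑π)^[k] z0 := by
    intro k
    show (π ^ k) z0 = (⇑π)^[k] z0
    rw [Equiv.Perm.coe_pow]
  have hxper : x per = z0 := by rw [hxiter]; exact Function.iterate_minimalPeriod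
  have hinj : ∀ k l, k < per → l < per → x k = x l → k = l := by
    intro k l hk hl he
    have := Function.iterate_injOn_Iio_minimalPeriod (f := ⇑π) (x := z0)
    rw [hxiter, hxiter] at he
    exact this hk hl he
  have hmod : ∀ m, x (m % per) = x m := by
    intro m; rw [hxiter, hxiter]; exact Function.iterate_mod_minimalPeriod_eq
  -- the high witness
  obtain ⟨m0, hm0⟩ := maxCycle_exists π
  have hm0high : (lam : ℤ) < ((x m0 : Box n) : ℤ) := by rw [hx]; rw [hm0]; exact h
  set m1 := m0 % per with hm1
  have hm1per : m1 < per := Nat.mod_lt _ hperpos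
  have hm1high : (lam : ℤ) < ((x m1 : Box n) : ℤ) := by rw [hm1, hmod]; exact hm0high
  have hm1pos : 1 ≤ m1 := by
    rcases Nat.eq_zero_or_pos m1 with h0 | h0
    · exfalso; rw [h0] at hm1high
      have : ((x 0 : Box n) : ℤ) = 0 := hz0v
      rw [this] at hm1high; omega
    · exact h0
  -- iF
  have hPex : ∃ k, (lam : ℤ) < ((x (k + 1) : Box n) : ℤ) :=
    ⟨m1 - 1, by rwa [Nat.sub_add_cancel hm1pos]⟩
  set iF := Nat.find hPex with hiFdef
  have hiF1 : (lam : ℤ) < ((x (iF + 1) : Box n) : ℤ) := Nat.find_spec hPex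
  have hiFle : iF ≤ m1 - 1 := Nat.find_le (by rwa [Nat.sub_add_cancel hm1pos])
  have hiFper : iF + 1 < per := by omega
  have prefix_le : ∀ k, k ≤ iF → ((x k : Box n) : ℤ) ≤ lam := by
    intro k hk
    cases k with
    | zero =>
      have h0 : x 0 = z0 := by show (π ^ 0) z0 = z0; simp
      rw [h0, hz0v]; positivity
    | succ k' =>
      by_contra hcon
      push_neg at hcon
      exact absurd hcon (Nat.find_min hPex (by omega))
  -- iL
  set iL := Nat.findGreatest (fun k => (lam : ℤ) < ((x k : Box n) : ℤ)) (per - 1) with hiLdef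
  have hiL : (lam : ℤ) < ((x iL : Box n) : ℤ) := by
    rw [hiLdef]
    exact Nat.findGreatest_spec (P := fun k => (lam : ℤ) < ((x k : Box n) : ℤ))
      (m := m1) (n := per - 1) (by omega) hm1high
  have hiLle : iL ≤ per - 1 := by
    rw [hiLdef]; exact Nat.findGreatest_le _
  have hiFiL : iF + 1 ≤ iL := by
    rw [hiLdef]
    exact Nat.le_findGreatest (P := fun k => (lam : ℤ) < ((x k : Box n) : ℤ))
      (n := per - 1) (by omega) hiF1
  have tail_le : ∀ k, iL < k → k ≤ per → ((x k : Box n) : ℤ) ≤ lam := by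
    intro k hk1 hk2
    rcases eq_or_lt_of_le hk2 with rfl | hk3
    · rw [hxper, hz0v]; positivity
    · by_contra hcon
      push_neg at hcon
      exact absurd hcon (Nat.findGreatest_is_greatest
        (P := fun k => (lam : ℤ) < ((x k : Box n) : ℤ)) (by rw [hiLdef] at hk1; exact hk1) (by omega))
  -- the two swap points
  set A := x iF with hA
  set C := x iL with hC
  have hAC : A ≠ C := by
    intro he
    have := hinj iF iL (by omega) (by omega) he
    omega
  set σ := π * Equiv.swap A C with hσ
  have hσapp : ∀ y, y ≠ A → y ≠ C → σ y = π y := by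
    intro y h1 h2
    rw [hσ]
    simp [Equiv.swap_apply_of_ne_of_ne h1 h2]
  have hσA : σ A = π C := by rw [hσ]; simp
  have hσC : σ C = π A := by rw [hσ]; simp
  -- the invariant set
  set O : Set (Box n) := {y | ∃ k, (k ≤ iF ∨ (iL + 1 ≤ k ∧ k < per)) ∧ y = x k} with hO
  have hOval : ∀ y ∈ O, ((y : Box n) : ℤ) ≤ lam := by
    rintro y ⟨k, hk | ⟨hk1, hk2⟩, rfl⟩
    · exact prefix_le k hk
    · exact tail_le k (by omega) (by omega)
  have hne_of_indices : ∀ k, k < per → k ≠ iF → x k ≠ A := by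
    intro k hk hkiF he
    exact hkiF (hinj k iF hk (by omega) he)
  have hne_of_indicesC : ∀ k, k < per → k ≠ iL → x k ≠ C := by
    intro k hk hkiL he
    exact hkiL (hinj k iL hk (by omega) he)
  have hOinv : ∀ y ∈ O, σ y ∈ O := by
    rintro y ⟨k, hk | ⟨hk1, hk2⟩, rfl⟩
    · rcases eq_or_lt_of_le hk with rfl | hklt
      · -- k = iF : σ A = π C = x (iL+1)
        rw [hσA, ← hstep]
        rcases eq_or_lt_of_le (show iL + 1 ≤ per by omega) with he | hlt
        · exact ⟨0, Or.inl (Nat.zero_le _), by rw [he, hxper]; rfl⟩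
        · exact ⟨iL + 1, Or.inr ⟨le_refl _, hlt⟩, rfl⟩
      · rw [hσapp _ (hne_of_indices k (by omega) (by omega))
            (hne_of_indicesC k (by omega) (by omega)), ← hstep]
        exact ⟨k + 1, Or.inl (by omega), rfl⟩
    · rw [hσapp _ (hne_of_indices k (by omega) (by omega))
          (hne_of_indicesC k (by omega) (by omega)), ← hstep]
      rcases eq_or_lt_of_le (show k + 1 ≤ per by omega) with he | hlt
      · exact ⟨0, Or.inl (Nat.zero_le _), by rw [he, hxper]; rfl⟩
      · exact ⟨k + 1, Or.inr ⟨by omega, hlt⟩, rfl⟩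
  have hOorb : ∀ m : ℕ, (σ ^ m) z0 ∈ O := by
    intro m
    induction m with
    | zero => exact ⟨0, Or.inl (Nat.zero_le _), rfl⟩
    | succ m ih =>
      have : (σ ^ (m + 1)) z0 = σ ((σ ^ m) z0) := by
        rw [pow_succ']; rfl
      rw [this]
      exact hOinv _ ih
  -- σ-orbit prefix follows π
  have hfollow : ∀ k, k ≤ iF → (σ ^ k) z0 = x k := by
    intro k hk
    induction k with
    | zero => rfl
    | succ k' ih =>
      have h1 : (σ ^ (k' + 1)) z0 = σ ((σ ^ k') z0) := by rw [pow_succ']; rfl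
      rw [h1, ih (by omega),
        hσapp _ (hne_of_indices k' (by omega) (by omega))
          (hne_of_indicesC k' (by omega) (by omega)), ← hstep]
  refine ⟨A, C, hAC, ?_, ?_, ?_, ?_, ?_⟩
  · -- max ≤ lam
    apply maxCycle_le
    intro m
    exact hOval _ (hOorb m)
  · -- A ≤ new max
    have : (σ ^ iF) z0 = A := hfollow iF (le_refl _)
    have h2 := le_maxCycle σ iF
    rw [hz0] at this
    rw [← hσ] at *
    rw [this] at h2
    exact h2
  · -- π C ≤ new max
    have h1 : (σ ^ (iF + 1)) z0 = π C := by
      rw [pow_succ', Equiv.Perm.mul_apply, hfollow iF (le_refl _), ← hA, hσA]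
    have h2 := le_maxCycle σ (iF + 1)
    rw [hz0] at h1
    rw [← hσ] at *
    rw [h1] at h2
    exact h2
  · -- lam + 1 ≤ π A
    have : π A = x (iF + 1) := (hstep iF).symm
    rw [this]; omega
  · omega


noncomputable def Sfun (p : ℝ) (π : Equiv.Perm (Box n)) : ℝ :=
  ∑ i : Box n, |((π i : ℤ) : ℝ) - ((i : ℤ) : ℝ)| ^ p

noncomputable def pt (n : ℕ) (z : ℤ) : Box n :=
  if h : z ∈ Finset.Icc (-(n : ℤ)) (n : ℤ) then ⟨z, h⟩ else boxZero n

lemma pt_coe (x : Box n) : pt n (x : ℤ) = x := by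
  rw [pt, dif_pos x.2]

noncomputable def recon (n lam : ℕ) (d : Equiv.Perm (Box n) × ℕ × ℕ × Bool × Bool) :
    Equiv.Perm (Box n) :=
  d.1 * Equiv.swap
    (if d.2.2.2.1 then pt n (maxCycle d.1 (boxZero n) - d.2.1)
      else d.1⁻¹ (pt n (maxCycle d.1 (boxZero n) - d.2.1)))
    (if d.2.2.2.2 then pt n ((lam : ℤ) + 1 + d.2.2.1)
      else d.1⁻¹ (pt n ((lam : ℤ) + 1 + d.2.2.1)))

lemma Sfun_diff (p : ℝ) (π : Equiv.Perm (Box n)) {A C : Box n} (hAC : A ≠ C) :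
    Sfun p π = Sfun p (π * Equiv.swap A C)
      - |((π C : ℤ) : ℝ) - ((A : ℤ) : ℝ)| ^ p - |((π A : ℤ) : ℝ) - ((C : ℤ) : ℝ)| ^ p
      + |((π A : ℤ) : ℝ) - ((A : ℤ) : ℝ)| ^ p + |((π C : ℤ) : ℝ) - ((C : ℤ) : ℝ)| ^ p := by
  classical
  set σ := π * Equiv.swap A C with hσ
  have hkey : ∀ h : Box n → ℝ,
      ∑ i : Box n, h i = ∑ i ∈ ((univ.erase A).erase C), h i + h C + h A := by
    intro h
    rw [← Finset.sum_erase_add univ h (mem_univ A),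
      ← Finset.sum_erase_add (univ.erase A) h (Finset.mem_erase.mpr ⟨Ne.symm hAC, mem_univ C⟩)]
  have hσA : σ A = π C := by rw [hσ]; simp
  have hσC : σ C = π A := by rw [hσ]; simp
  have hinner : ∑ i ∈ ((univ.erase A).erase C), |((π i : ℤ) : ℝ) - ((i : ℤ) : ℝ)| ^ p
      = ∑ i ∈ ((univ.erase A).erase C), |((σ i : ℤ) : ℝ) - ((i : ℤ) : ℝ)| ^ p := by
    apply Finset.sum_congr rfl
    intro i hi
    have h1 : i ≠ C := (Finset.mem_erase.mp hi).1
    have h2 : i ≠ A := (Finset.mem_erase.mp (Finset.mem_erase.mp hi).2).1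
    have : σ i = π i := by
      rw [hσ]; simp [Equiv.swap_apply_of_ne_of_ne h2 h1]
    rw [this]
  rw [Sfun, Sfun, hkey, hkey (fun i => |((σ i : ℤ) : ℝ) - ((i : ℤ) : ℝ)| ^ p), hinner, hσA, hσC]
  ring


lemma key_step {lam : ℕ} {p : ℝ} (hp : 1 ≤ p) (π : Equiv.Perm (Box n))
    (h : (lam : ℤ) < maxCycle π (boxZero n)) :
    ∃ d : Equiv.Perm (Box n) × ℕ × ℕ × Bool × Bool,
      recon n lam d = π ∧
      d.2.1 < n + lam + 2 ∧ d.2.2.1 < n + lam + 2 ∧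
      maxCycle d.1 (boxZero n) ≤ lam ∧
      Sfun p d.1 + ((lam : ℝ) - ((maxCycle d.1 (boxZero n) : ℤ) : ℝ)) ^ p
        + (d.2.1 : ℝ) ^ p + (d.2.2.1 : ℝ) ^ p ≤ Sfun p π := by
  classical
  obtain ⟨A, C, hAC, hmax, hAj, hc'j, ha', hc⟩ := construction π h
  set σ := π * Equiv.swap A C with hσdef
  set j := maxCycle σ (boxZero n) with hjdef
  have hj0 : 0 ≤ j := maxCycle_nonneg σ
  -- integer data
  set loZ : ℤ := if ((π C : Box n) : ℤ) ≤ (A : ℤ) then (A : ℤ) else ((π C : Box n) : ℤ) with hloZ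
  set hiZ : ℤ := if (C : ℤ) ≤ ((π A : Box n) : ℤ) then (C : ℤ) else ((π A : Box n) : ℤ) with hhiZ
  have hloZj : loZ ≤ j := by rw [hloZ]; split <;> assumption
  have hloZn : -(n : ℤ) ≤ loZ := by rw [hloZ]; split <;> exact box_ge _
  have hhiZn : hiZ ≤ (n : ℤ) := by rw [hhiZ]; split <;> exact box_le _
  have hhiZl : (lam : ℤ) + 1 ≤ hiZ := by rw [hhiZ]; split <;> assumption
  set f₁ : ℕ := (j - loZ).toNat with hf₁
  set f₂ : ℕ := (hiZ - ((lam : ℤ) + 1)).toNat with hf₂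
  set b₁ : Bool := decide (((π C : Box n) : ℤ) ≤ (A : ℤ)) with hb₁
  set b₂ : Bool := decide ((C : ℤ) ≤ ((π A : Box n) : ℤ)) with hb₂
  refine ⟨(σ, f₁, f₂, b₁, b₂), ?_, ?_, ?_, ?_, ?_⟩
  · -- reconstruction
    show recon n lam (σ, f₁, f₂, b₁, b₂) = π
    have hjf₁ : j - (f₁ : ℤ) = loZ := by rw [hf₁]; omega
    have hlf₂ : (lam : ℤ) + 1 + (f₂ : ℤ) = hiZ := by rw [hf₂]; omega
    have harg1 : (if b₁ then pt n (j - (f₁ : ℤ)) else σ⁻¹ (pt n (j - (f₁ : ℤ)))) = A := by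
      rw [hjf₁, hb₁]
      rcases le_or_gt ((π C : Box n) : ℤ) (A : ℤ) with h1 | h1
      · rw [if_pos (by simpa using h1), hloZ, if_pos h1, pt_coe]
      · have hlo : loZ = ((π C : Box n) : ℤ) := by rw [hloZ, if_neg (not_le.mpr h1)]
        rw [if_neg (by simpa using h1), hlo, pt_coe]
        have : σ A = π C := by rw [hσdef]; simp
        rw [← this]; exact σ.symm_apply_apply A
    have harg2 : (if b₂ then pt n ((lam : ℤ) + 1 + (f₂ : ℤ)) else σ⁻¹ (pt n ((lam : ℤ) + 1 + (f₂ : ℤ)))) = C := by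
      rw [hlf₂, hb₂]
      rcases le_or_gt (C : ℤ) ((π A : Box n) : ℤ) with h1 | h1
      · rw [if_pos (by simpa using h1), hhiZ, if_pos h1, pt_coe]
      · have hhi : hiZ = ((π A : Box n) : ℤ) := by rw [hhiZ, if_neg (not_le.mpr h1)]
        rw [if_neg (by simpa using h1), hhi, pt_coe]
        have : σ C = π A := by rw [hσdef]; simp
        rw [← this]; exact σ.symm_apply_apply C
    have hrec : recon n lam (σ, f₁, f₂, b₁, b₂) = σ * Equiv.swap
        (if b₁ then pt n (j - (f₁ : ℤ)) else σ⁻¹ (pt n (j - (f₁ : ℤ))))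
        (if b₂ then pt n ((lam : ℤ) + 1 + (f₂ : ℤ)) else σ⁻¹ (pt n ((lam : ℤ) + 1 + (f₂ : ℤ)))) := rfl
    rw [hrec, harg1, harg2, hσdef, mul_assoc, Equiv.swap_mul_self, mul_one]
  · -- f₁ bound
    show f₁ < n + lam + 2
    have h1 : j ≤ (lam : ℤ) := hmax
    rw [hf₁]; omega
  · show f₂ < n + lam + 2
    rw [hf₂]; omega
  · exact hmax
  · -- the energy inequality
    have hSd := Sfun_diff p π hAC
    have hcost := cost_main (p := p) (lam := (lam : ℝ)) (j := ((j : ℤ) : ℝ))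
      (a := ((A : ℤ) : ℝ)) (c' := (((π C : Box n) : ℤ) : ℝ))
      (a' := (((π A : Box n) : ℤ) : ℝ)) (c := ((C : ℤ) : ℝ))
      hp (by exact_mod_cast hmax) (by exact_mod_cast hAj) (by exact_mod_cast hc'j)
      (by push_cast; exact_mod_cast ha') (by push_cast; exact_mod_cast hc)
    -- identify the real ifs with the integer data
    have hif1 : (if (((π C : Box n) : ℤ) : ℝ) ≤ ((A : ℤ) : ℝ) then ((A : ℤ) : ℝ)
        else (((π C : Box n) : ℤ) : ℝ)) = ((loZ : ℤ) : ℝ) := by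
      rw [hloZ]
      rcases le_or_gt ((π C : Box n) : ℤ) (A : ℤ) with h1 | h1
      · rw [if_pos (by exact_mod_cast h1), if_pos h1]
      · rw [if_neg (by exact_mod_cast not_le.mpr h1), if_neg (not_le.mpr h1)]
    have hif2 : (if ((C : ℤ) : ℝ) ≤ (((π A : Box n) : ℤ) : ℝ) then ((C : ℤ) : ℝ)
        else (((π A : Box n) : ℤ) : ℝ)) = ((hiZ : ℤ) : ℝ) := by
      rw [hhiZ]
      rcases le_or_gt (C : ℤ) ((π A : Box n) : ℤ) with h1 | h1
      · rw [if_pos (by exact_mod_cast h1), if_pos h1]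
      · rw [if_neg (by exact_mod_cast not_le.mpr h1), if_neg (not_le.mpr h1)]
    rw [hif1, hif2] at hcost
    have hf₁R : (f₁ : ℝ) = ((j : ℤ) : ℝ) - ((loZ : ℤ) : ℝ) := by
      rw [hf₁]
      have h2 : ((j - loZ).toNat : ℤ) = j - loZ := Int.toNat_of_nonneg (by omega)
      exact_mod_cast h2
    have hf₂R : (f₂ : ℝ) = ((hiZ : ℤ) : ℝ) - ((lam : ℝ) + 1) := by
      rw [hf₂]
      have h2 : ((hiZ - ((lam : ℤ) + 1)).toNat : ℤ) = hiZ - ((lam : ℤ) + 1) :=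
        Int.toNat_of_nonneg (by omega)
      exact_mod_cast h2
    rw [hf₁R, hf₂R]
    -- absolute values of the removed edges
    have habs1 : |(((π A : Box n) : ℤ) : ℝ) - ((A : ℤ) : ℝ)|
        = (((π A : Box n) : ℤ) : ℝ) - ((A : ℤ) : ℝ) := by
      apply abs_of_nonneg
      have h1 : ((A : ℤ) : ℝ) ≤ ((j : ℤ) : ℝ) := by exact_mod_cast hAj
      have h2 : ((j : ℤ) : ℝ) ≤ (lam : ℝ) := by exact_mod_cast hmax
      have h3 : (lam : ℝ) + 1 ≤ (((π A : Box n) : ℤ) : ℝ) := by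
        push_cast; exact_mod_cast ha'
      linarith
    have habs2 : |(((π C : Box n) : ℤ) : ℝ) - ((C : ℤ) : ℝ)|
        = ((C : ℤ) : ℝ) - (((π C : Box n) : ℤ) : ℝ) := by
      rw [abs_sub_comm]
      apply abs_of_nonneg
      have h1 : (((π C : Box n) : ℤ) : ℝ) ≤ ((j : ℤ) : ℝ) := by exact_mod_cast hc'j
      have h2 : ((j : ℤ) : ℝ) ≤ (lam : ℝ) := by exact_mod_cast hmax
      have h3 : (lam : ℝ) + 1 ≤ ((C : ℤ) : ℝ) := by push_cast; exact_mod_cast hc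
      linarith
    have habs3 : |(((π C : Box n) : ℤ) : ℝ) - ((A : ℤ) : ℝ)|
        = |((A : ℤ) : ℝ) - (((π C : Box n) : ℤ) : ℝ)| := abs_sub_comm _ _
    rw [habs1, habs2, habs3] at hSd
    linarith

lemma expsum_bound {W M : ℕ} (hW : 1 ≤ W) {p : ℝ} (hp : 1 ≤ p) :
    ∑ f ∈ Finset.range M, Real.exp (-(f : ℝ) ^ p / (W : ℝ) ^ p) ≤ Real.exp 2 * W := by
  have hW0 : (0 : ℝ) < W := by exact_mod_cast hW
  have hWp : (0 : ℝ) < (W : ℝ) ^ p := Real.rpow_pos_of_pos hW0 p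
  set r := Real.exp (-(1 / (W : ℝ))) with hr
  have hr0 : 0 < r := Real.exp_pos _
  have hr1 : r < 1 := by
    rw [hr, Real.exp_lt_one_iff]
    have : (0:ℝ) < 1 / (W:ℝ) := by positivity
    linarith
  -- term bound : exp(-f^p/W^p) ≤ e * r^f
  have hterm : ∀ f : ℕ, Real.exp (-(f : ℝ) ^ p / (W : ℝ) ^ p) ≤ Real.exp 1 * r ^ f := by
    intro f
    have hkey : (f : ℝ) / W - 1 ≤ (f : ℝ) ^ p / (W : ℝ) ^ p := by
      rcases le_or_gt (W : ℝ) (f : ℝ) with hf | hf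
      · have hx1 : (1 : ℝ) ≤ (f : ℝ) / W := (one_le_div hW0).mpr hf
        have h2 : (f : ℝ) / W ≤ ((f : ℝ) / W) ^ p := by
          calc (f : ℝ) / W = ((f : ℝ) / W) ^ (1 : ℝ) := (Real.rpow_one _).symm
          _ ≤ ((f : ℝ) / W) ^ p := Real.rpow_le_rpow_of_exponent_le hx1 hp
        have h3 : ((f : ℝ) / W) ^ p = (f : ℝ) ^ p / (W : ℝ) ^ p :=
          Real.div_rpow (by positivity) (le_of_lt hW0) p
        rw [h3] at h2
        linarith
      · have h1 : (f : ℝ) / W - 1 ≤ 0 := by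
          rw [sub_nonpos, div_le_one hW0]; linarith
        have h2 : (0 : ℝ) ≤ (f : ℝ) ^ p / (W : ℝ) ^ p := by positivity
        linarith
    have h4 : -((f : ℝ) ^ p / (W : ℝ) ^ p) ≤ 1 - (f : ℝ) / W := by linarith
    calc Real.exp (-(f : ℝ) ^ p / (W : ℝ) ^ p)
        = Real.exp (-((f : ℝ) ^ p / (W : ℝ) ^ p)) := by rw [neg_div]
      _ ≤ Real.exp (1 - (f : ℝ) / W) := Real.exp_le_exp.mpr h4
      _ = Real.exp 1 * Real.exp (-(f : ℝ) / W) := by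
          rw [← Real.exp_add]; ring_nf
      _ = Real.exp 1 * r ^ f := by
          rw [hr, ← Real.exp_nat_mul]
          congr 1
          ring
  calc ∑ f ∈ Finset.range M, Real.exp (-(f : ℝ) ^ p / (W : ℝ) ^ p)
      ≤ ∑ f ∈ Finset.range M, Real.exp 1 * r ^ f := Finset.sum_le_sum fun f _ => hterm f
    _ = Real.exp 1 * ∑ f ∈ Finset.range M, r ^ f := by rw [Finset.mul_sum]
    _ ≤ Real.exp 1 * (1 / (1 - r)) := by
        apply mul_le_mul_of_nonneg_left _ (le_of_lt (Real.exp_pos 1))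
        have hgeom : ∑ f ∈ Finset.range M, r ^ f = (1 - r ^ M) / (1 - r) := by
          rw [geom_sum_eq (ne_of_lt hr1)]
          rw [div_eq_div_iff (by linarith) (by linarith)]
          ring
        rw [hgeom]
        apply div_le_div_of_nonneg_right _ (by linarith)
        · have : (0:ℝ) ≤ r ^ M := by positivity
          linarith
    _ ≤ Real.exp 1 * (Real.exp 1 * W) := by
        apply mul_le_mul_of_nonneg_left _ (le_of_lt (Real.exp_pos 1))
        have h2 : Real.exp (-(1:ℝ)) ≤ r := by
          rw [hr]
          apply Real.exp_le_exp.mpr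
          rw [neg_le_neg_iff, div_le_one hW0]
          exact_mod_cast hW
        have hx : (1 / (W:ℝ)) + 1 ≤ Real.exp (1 / (W:ℝ)) := Real.add_one_le_exp _
        have hrr : Real.exp (1 / (W:ℝ)) * r = 1 := by
          rw [hr, ← Real.exp_add]; simp
        have h5 : ((1 / (W:ℝ)) + 1) * r ≤ 1 := by nlinarith
        have h6a : (1 / (W:ℝ)) * r ≤ 1 - r := by nlinarith
        have h6 : (1 / (W:ℝ)) * Real.exp (-(1:ℝ)) ≤ 1 - r := by
          have h6b := mul_le_mul_of_nonneg_left h2 (by positivity : (0:ℝ) ≤ 1 / (W:ℝ))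
          linarith
        have hpos : (0:ℝ) < (1 / (W:ℝ)) * Real.exp (-(1:ℝ)) := by positivity
        have h7 : 1 / (1 - r) ≤ 1 / ((1 / (W:ℝ)) * Real.exp (-(1:ℝ))) :=
          one_div_le_one_div_of_le hpos h6
        have hR : 1 / ((1 / (W:ℝ)) * Real.exp (-(1:ℝ))) = Real.exp 1 * W := by
          rw [Real.exp_neg, one_div, mul_inv, inv_inv, one_div, inv_inv]
          ring
        rw [hR] at h7
        exact h7
    _ = Real.exp 2 * W := by
        rw [← mul_assoc, ← Real.exp_add]
        norm_num


lemma gibbsWeight_eq (p : ℝ) (W n : ℕ) (π : Equiv.Perm (Box n)) :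
    gibbsWeight p W n π = Real.exp (-(W : ℝ) ^ (-p) * Sfun p π) := rfl

lemma gibbsWeight_pos (p : ℝ) (W n : ℕ) (π : Equiv.Perm (Box n)) :
    0 < gibbsWeight p W n π := Real.exp_pos _

lemma ite_irrel {c : Prop} (h1 h2 : Decidable c) (a b : ℝ) :
    @ite _ c h1 a b = @ite _ c h2 a b := by congr

end OneStep

set_option maxHeartbeats 2000000 in
/-- There is a universal constant `C > 0` such that for every
`p ∈ [1,∞)`, all integers `n, W ≥ 1` and every integer `λ ≥ 1`,
`P_{p,W,n}(max C_π(0) > λ) ≤ C W² Σ_{j=0}^{λ} exp(-(λ-j)^p / W^p) P_{p,W,n}(max C_π(0) = j)`. -/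
theorem one_step_max_gibbs :
    ∃ C : ℝ, 0 < C ∧ ∀ (p : ℝ), 1 ≤ p → ∀ (n W : ℕ), 1 ≤ n → 1 ≤ W →
      ∀ lam : ℕ, 1 ≤ lam →
        gibbsProb p W n {π | (lam : ℤ) < maxCycle π (boxZero n)} ≤
          C * W ^ 2 * ∑ j ∈ Finset.range (lam + 1),
            Real.exp (-((lam : ℝ) - (j : ℝ)) ^ p / (W : ℝ) ^ p) *
              gibbsProb p W n {π | maxCycle π (boxZero n) = (j : ℤ)} := by
  classical
  refine ⟨4 * Real.exp 4, by positivity, ?_⟩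
  intro p hp n W hn hW lam hlam
  have hW0 : (0 : ℝ) < W := by exact_mod_cast hW
  have hWp : (0 : ℝ) < (W : ℝ) ^ p := Real.rpow_pos_of_pos hW0 p
  set w : Equiv.Perm (Box n) → ℝ := gibbsWeight p W n with hw
  have hw_pos : ∀ σ, 0 < w σ := fun σ => OneStep.gibbsWeight_pos p W n σ
  set Z : ℝ := ∑ σ : Equiv.Perm (Box n), gibbsWeight p W n σ with hZdef
  have hZ : 0 < Z := Finset.sum_pos (fun σ _ => hw_pos σ) Finset.univ_nonempty
  set M : ℕ := n + lam + 2 with hM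
  set E : ℕ → ℝ := fun f => Real.exp (-(f : ℝ) ^ p / (W : ℝ) ^ p) with hE
  have hE_nonneg : ∀ f, 0 ≤ E f := fun f => le_of_lt (Real.exp_pos _)
  set hfun : Equiv.Perm (Box n) → ℝ := fun σ =>
    ∑ j ∈ Finset.range (lam + 1),
      if maxCycle σ (boxZero n) = (j : ℤ) then
        Real.exp (-((lam : ℝ) - (j : ℝ)) ^ p / (W : ℝ) ^ p) * w σ else 0 with hhfun
  have hfun_nonneg : ∀ σ, 0 ≤ hfun σ := by
    intro σ
    apply Finset.sum_nonneg
    intro j _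
    split_ifs
    · exact le_of_lt (mul_pos (Real.exp_pos _) (hw_pos σ))
    · exact le_refl 0
  -- the decorated tuples
  set T : Finset (Equiv.Perm (Box n) × ℕ × ℕ × Bool × Bool) :=
    Finset.univ ×ˢ (Finset.range M ×ˢ (Finset.range M ×ˢ (Finset.univ ×ˢ Finset.univ))) with hT
  set g : Equiv.Perm (Box n) × ℕ × ℕ × Bool × Bool → ℝ :=
    fun d => E d.2.1 * (E d.2.2.1 * hfun d.1) with hg
  have hg_nonneg : ∀ d, 0 ≤ g d :=
    fun d => mul_nonneg (hE_nonneg _) (mul_nonneg (hE_nonneg _) (hfun_nonneg _))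
  set ι : Equiv.Perm (Box n) → Equiv.Perm (Box n) × ℕ × ℕ × Bool × Bool := fun π =>
    if h : (lam : ℤ) < maxCycle π (boxZero n) then Classical.choose (OneStep.key_step hp π h)
    else (1, 0, 0, false, false) with hι
  have hι_spec : ∀ (π : Equiv.Perm (Box n)) (h : (lam : ℤ) < maxCycle π (boxZero n)),
      OneStep.recon n lam (ι π) = π ∧ (ι π).2.1 < M ∧ (ι π).2.2.1 < M ∧
      maxCycle (ι π).1 (boxZero n) ≤ lam ∧
      OneStep.Sfun p (ι π).1 + ((lam : ℝ) - ((maxCycle (ι π).1 (boxZero n) : ℤ) : ℝ)) ^ p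
        + ((ι π).2.1 : ℝ) ^ p + ((ι π).2.2.1 : ℝ) ^ p ≤ OneStep.Sfun p π := by
    intro π h
    have he : ι π = Classical.choose (OneStep.key_step hp π h) := by rw [hι]; exact dif_pos h
    rw [he]
    exact Classical.choose_spec (OneStep.key_step hp π h)
  -- the pointwise bound
  have hpoint : ∀ π : Equiv.Perm (Box n), (lam : ℤ) < maxCycle π (boxZero n) →
      w π ≤ g (ι π) := by
    intro π h
    obtain ⟨hrec, hb1, hb2, hjlam, hcost⟩ := hι_spec π h
    have hj0 : 0 ≤ maxCycle (ι π).1 (boxZero n) := OneStep.maxCycle_nonneg _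
    set σ := (ι π).1 with hσ
    set f₁ := (ι π).2.1 with hf₁
    set f₂ := (ι π).2.2.1 with hf₂
    set j' := maxCycle σ (boxZero n) with hj'
    set jN := j'.toNat with hjN
    have hjNZ : (jN : ℤ) = j' := Int.toNat_of_nonneg hj0
    have hjlam' : j' ≤ (lam : ℤ) := hjlam
    have hfσ : hfun σ = Real.exp (-((lam : ℝ) - (jN : ℝ)) ^ p / (W : ℝ) ^ p) * w σ := by
      have h0 : ∀ b ∈ Finset.range (lam + 1), b ≠ jN →
          (if maxCycle σ (boxZero n) = (b : ℤ) then
            Real.exp (-((lam : ℝ) - (b : ℝ)) ^ p / (W : ℝ) ^ p) * w σ else 0) = 0 := by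
        intro b _ hb
        rw [if_neg]
        intro hcon
        apply hb
        omega
      have h1 : jN ∉ Finset.range (lam + 1) →
          (if maxCycle σ (boxZero n) = (jN : ℤ) then
            Real.exp (-((lam : ℝ) - (jN : ℝ)) ^ p / (W : ℝ) ^ p) * w σ else 0) = 0 :=
        fun hnmem => absurd (Finset.mem_range.mpr (by omega)) hnmem
      show (∑ j ∈ Finset.range (lam + 1),
          if maxCycle σ (boxZero n) = (j : ℤ) then
            Real.exp (-((lam : ℝ) - (j : ℝ)) ^ p / (W : ℝ) ^ p) * w σ else 0)
        = Real.exp (-((lam : ℝ) - (jN : ℝ)) ^ p / (W : ℝ) ^ p) * w σ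
      rw [Finset.sum_eq_single jN h0 h1, if_pos hjNZ.symm]
    have hcast : ((jN : ℕ) : ℝ) = ((j' : ℤ) : ℝ) := by exact_mod_cast hjNZ
    have hcX : (W : ℝ) ^ (-p) = ((W : ℝ) ^ p)⁻¹ := Real.rpow_neg (le_of_lt hW0) p
    have hc0 : 0 ≤ (W : ℝ) ^ (-p) := Real.rpow_nonneg (le_of_lt hW0) _
    have hwπ : w π = Real.exp (-(W : ℝ) ^ (-p) * OneStep.Sfun p π) := rfl
    have hwσ : w σ = Real.exp (-(W : ℝ) ^ (-p) * OneStep.Sfun p σ) := rfl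
    have hmono : w π ≤ Real.exp (-(W : ℝ) ^ (-p) * (OneStep.Sfun p σ
        + ((lam : ℝ) - ((j' : ℤ) : ℝ)) ^ p + ((f₁ : ℕ) : ℝ) ^ p + ((f₂ : ℕ) : ℝ) ^ p)) := by
      rw [hwπ]
      apply Real.exp_le_exp.mpr
      nlinarith [mul_le_mul_of_nonneg_left hcost hc0]
    have hsplit : Real.exp (-(W : ℝ) ^ (-p) * (OneStep.Sfun p σ
        + ((lam : ℝ) - ((j' : ℤ) : ℝ)) ^ p + ((f₁ : ℕ) : ℝ) ^ p + ((f₂ : ℕ) : ℝ) ^ p))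
        = w σ * Real.exp (-((lam : ℝ) - ((j' : ℤ) : ℝ)) ^ p / (W : ℝ) ^ p)
          * Real.exp (-((f₁ : ℕ) : ℝ) ^ p / (W : ℝ) ^ p)
          * Real.exp (-((f₂ : ℕ) : ℝ) ^ p / (W : ℝ) ^ p) := by
      rw [hwσ, ← Real.exp_add, ← Real.exp_add, ← Real.exp_add]
      congr 1
      rw [hcX]
      field_simp
      ring
    have hgval : g (ι π) = E f₁ * (E f₂ * hfun σ) := rfl
    calc w π ≤ _ := hmono
      _ = w σ * Real.exp (-((lam : ℝ) - ((j' : ℤ) : ℝ)) ^ p / (W : ℝ) ^ p)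
          * Real.exp (-((f₁ : ℕ) : ℝ) ^ p / (W : ℝ) ^ p)
          * Real.exp (-((f₂ : ℕ) : ℝ) ^ p / (W : ℝ) ^ p) := hsplit
      _ = g (ι π) := by
          rw [hgval, hfσ]
          show _ = Real.exp (-(f₁ : ℝ) ^ p / (W : ℝ) ^ p)
            * (Real.exp (-(f₂ : ℝ) ^ p / (W : ℝ) ^ p)
              * (Real.exp (-((lam : ℝ) - (jN : ℝ)) ^ p / (W : ℝ) ^ p) * w σ))
          rw [hcast]
          ring
  -- summation over the bad set
  set Afin := Finset.univ.filter
    (fun π : Equiv.Perm (Box n) => (lam : ℤ) < maxCycle π (boxZero n)) with hAfin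
  have hinj : ∀ π ∈ Afin, ∀ π' ∈ Afin, ι π = ι π' → π = π' := by
    intro π hπ π' hπ' he
    have h1 := (Finset.mem_filter.mp hπ).2
    have h2 := (Finset.mem_filter.mp hπ').2
    rw [← (hι_spec π h1).1, ← (hι_spec π' h2).1, he]
  have himage : Afin.image ι ⊆ T := by
    intro t ht
    obtain ⟨π, hπ, rfl⟩ := Finset.mem_image.mp ht
    have h1 := (Finset.mem_filter.mp hπ).2
    obtain ⟨-, hbb1, hbb2, -, -⟩ := hι_spec π h1
    rw [hT]
    simp only [Finset.mem_product, Finset.mem_univ, Finset.mem_range, true_and, and_true]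
    exact ⟨hbb1, hbb2⟩
  have hsum1 : ∑ π ∈ Afin, w π ≤ ∑ t ∈ T, g t := by
    calc ∑ π ∈ Afin, w π ≤ ∑ π ∈ Afin, g (ι π) := by
          apply Finset.sum_le_sum
          intro π hπ
          exact hpoint π (Finset.mem_filter.mp hπ).2
      _ = ∑ t ∈ Afin.image ι, g t := (Finset.sum_image hinj).symm
      _ ≤ ∑ t ∈ T, g t := Finset.sum_le_sum_of_subset_of_nonneg himage (fun t _ _ => hg_nonneg t)
  -- factorization of the sum over T
  set SE := ∑ f ∈ Finset.range M, E f with hSE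
  have hfact : ∑ t ∈ T, g t = (∑ σ : Equiv.Perm (Box n), hfun σ) * (SE * (SE * 4)) := by
    rw [hT]
    rw [Finset.sum_product]
    have hout : ∀ σ : Equiv.Perm (Box n),
        (∑ y ∈ Finset.range M ×ˢ (Finset.range M ×ˢ (Finset.univ ×ˢ Finset.univ)), g (σ, y))
        = hfun σ * (SE * (SE * 4)) := by
      intro σ
      rw [Finset.sum_product]
      have hin1 : ∀ f₁ : ℕ,
          (∑ z ∈ Finset.range M ×ˢ ((Finset.univ : Finset Bool) ×ˢ (Finset.univ : Finset Bool)),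
            g (σ, f₁, z)) = E f₁ * (SE * (4 * hfun σ)) := by
        intro f₁
        rw [Finset.sum_product]
        have hin2 : ∀ f₂ : ℕ,
            (∑ b ∈ (Finset.univ : Finset Bool) ×ˢ (Finset.univ : Finset Bool),
              g (σ, f₁, f₂, b)) = E f₂ * (4 * (E f₁ * hfun σ)) := by
          intro f₂
          have : ∀ b ∈ (Finset.univ : Finset Bool) ×ˢ (Finset.univ : Finset Bool),
              g (σ, f₁, f₂, b) = E f₁ * (E f₂ * hfun σ) := by
            intro b _; rfl
          rw [Finset.sum_congr rfl this, Finset.sum_const]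
          have hcard : ((Finset.univ : Finset Bool) ×ˢ (Finset.univ : Finset Bool)).card = 4 := rfl
          rw [hcard, nsmul_eq_mul]
          push_cast
          ring
        calc (∑ f₂ ∈ Finset.range M, ∑ b ∈ (Finset.univ : Finset Bool) ×ˢ (Finset.univ : Finset Bool),
              g (σ, f₁, f₂, b))
            = ∑ f₂ ∈ Finset.range M, E f₂ * (4 * (E f₁ * hfun σ)) :=
              Finset.sum_congr rfl (fun f₂ _ => hin2 f₂)
          _ = SE * (4 * (E f₁ * hfun σ)) := by rw [hSE, ← Finset.sum_mul]
          _ = E f₁ * (SE * (4 * hfun σ)) := by ring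
      calc (∑ f₁ ∈ Finset.range M,
            ∑ z ∈ Finset.range M ×ˢ ((Finset.univ : Finset Bool) ×ˢ (Finset.univ : Finset Bool)),
              g (σ, f₁, z))
          = ∑ f₁ ∈ Finset.range M, E f₁ * (SE * (4 * hfun σ)) :=
            Finset.sum_congr rfl (fun f₁ _ => hin1 f₁)
        _ = SE * (SE * (4 * hfun σ)) := by rw [hSE, ← Finset.sum_mul]
        _ = hfun σ * (SE * (SE * 4)) := by ring
    calc (∑ σ : Equiv.Perm (Box n),
          ∑ y ∈ Finset.range M ×ˢ (Finset.range M ×ˢ (Finset.univ ×ˢ Finset.univ)), g (σ, y))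
        = ∑ σ : Equiv.Perm (Box n), hfun σ * (SE * (SE * 4)) :=
          Finset.sum_congr rfl (fun σ _ => hout σ)
      _ = (∑ σ : Equiv.Perm (Box n), hfun σ) * (SE * (SE * 4)) := by rw [← Finset.sum_mul]
  -- bounds for the factors
  have hSEb : SE ≤ Real.exp 2 * W := OneStep.expsum_bound hW hp
  have hSE0 : 0 ≤ SE := Finset.sum_nonneg fun f _ => hE_nonneg f
  have hSh0 : 0 ≤ ∑ σ : Equiv.Perm (Box n), hfun σ :=
    Finset.sum_nonneg fun σ _ => hfun_nonneg σ
  have hTb : ∑ t ∈ T, g t ≤ (∑ σ : Equiv.Perm (Box n), hfun σ)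
      * (4 * Real.exp 4 * (W : ℝ) ^ 2) := by
    rw [hfact]
    apply mul_le_mul_of_nonneg_left _ hSh0
    have h1 : SE * (SE * 4) ≤ (Real.exp 2 * W) * ((Real.exp 2 * W) * 4) := by
      have h2 : SE * SE ≤ (Real.exp 2 * W) * (Real.exp 2 * W) :=
        mul_le_mul hSEb hSEb hSE0 (by positivity)
      nlinarith
    have h3 : (Real.exp 2 * W) * ((Real.exp 2 * W) * 4) = 4 * Real.exp 4 * (W : ℝ) ^ 2 := by
      have hee : Real.exp 2 * Real.exp 2 = Real.exp 4 := by
        rw [← Real.exp_add]; norm_num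
      nlinarith [hee]
    linarith
  -- exchange the sums in Σ hfun
  have hswap : ∑ σ : Equiv.Perm (Box n), hfun σ
      = ∑ j ∈ Finset.range (lam + 1), Real.exp (-((lam : ℝ) - (j : ℝ)) ^ p / (W : ℝ) ^ p)
          * ∑ σ : Equiv.Perm (Box n),
              (if maxCycle σ (boxZero n) = (j : ℤ) then w σ else 0) := by
    rw [Finset.sum_comm]
    apply Finset.sum_congr rfl
    intro j _
    rw [Finset.mul_sum]
    apply Finset.sum_congr rfl
    intro σ _
    split_ifs with hcnd
    · rfl
    · rw [mul_zero]
  -- identify numerators with gibbsProb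
  have hgoalL : gibbsProb p W n {π | (lam : ℤ) < maxCycle π (boxZero n)}
      = (∑ π ∈ Afin, w π) / Z := by
    rw [gibbsProb]
    congr 1
    rw [hAfin, Finset.sum_filter]
    apply Finset.sum_congr rfl
    intro π _
    simp only [Set.mem_setOf_eq]
    exact OneStep.ite_irrel _ _ _ _
  have hgoalR : ∀ j : ℕ, gibbsProb p W n {π | maxCycle π (boxZero n) = (j : ℤ)}
      = (∑ σ : Equiv.Perm (Box n), (if maxCycle σ (boxZero n) = (j : ℤ) then w σ else 0)) / Z := by
    intro j
    rw [gibbsProb]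
    congr 1
    apply Finset.sum_congr rfl
    intro σ _
    simp only [Set.mem_setOf_eq]
    exact OneStep.ite_irrel _ _ _ _
  -- put everything together
  have hnum : ∑ π ∈ Afin, w π ≤ 4 * Real.exp 4 * (W : ℝ) ^ 2
      * ∑ j ∈ Finset.range (lam + 1), Real.exp (-((lam : ℝ) - (j : ℝ)) ^ p / (W : ℝ) ^ p)
          * ∑ σ : Equiv.Perm (Box n),
              (if maxCycle σ (boxZero n) = (j : ℤ) then w σ else 0) := by
    calc ∑ π ∈ Afin, w π ≤ ∑ t ∈ T, g t := hsum1
      _ ≤ (∑ σ : Equiv.Perm (Box n), hfun σ) * (4 * Real.exp 4 * (W : ℝ) ^ 2) := hTb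
      _ = _ := by rw [hswap]; ring
  rw [hgoalL]
  have hR : ∀ j ∈ Finset.range (lam + 1),
      Real.exp (-((lam : ℝ) - (j : ℝ)) ^ p / (W : ℝ) ^ p)
        * gibbsProb p W n {π | maxCycle π (boxZero n) = (j : ℤ)}
      = (Real.exp (-((lam : ℝ) - (j : ℝ)) ^ p / (W : ℝ) ^ p)
          * ∑ σ : Equiv.Perm (Box n),
              (if maxCycle σ (boxZero n) = (j : ℤ) then w σ else 0)) / Z := by
    intro j _
    rw [hgoalR j, mul_div_assoc]
  rw [Finset.sum_congr rfl hR, ← Finset.sum_div, ← mul_div_assoc]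
  exact div_le_div_of_nonneg_right hnum hZ.le
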